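/- Let S be a pointed affine semigroup with semigroup ring R = k[S] (a domain), let I be a monomial ideal of R minimally generated by monomials x^{v_1}, …, x^{v_r}, and let a ∈ ℤ^d with x^a ∈ R. Then x^a ∈ tr(I) if and only if there exist an index i and u ∈ ℤS with u + v_j ∈ S for all j, such that a = u + v_i. -/

import Mathlib

noncomputable section

/-- The trace ideal of a module. -/
def traceIdeal (R : Type*) [CommRing R] (M : Type*) [AddCommGroup M] [Module R M] :
    Ideal R :=
  ⨆ φ : M →ₗ[R] R, LinearMap.range φ

open AddMonoidAlgebra Finsupp

noncomputable section Test

variable {d : ℕ} (k : Type*) [Field k] (S : AddSubmonoid (Fin d → ℤ))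

def emb : AddMonoidAlgebra k S →+* AddMonoidAlgebra k (Fin d → ℤ) :=
  AddMonoidAlgebra.mapDomainRingHom k S.subtype

lemma emb_single (v : S) (c : k) :
    emb k S (AddMonoidAlgebra.single v c) = AddMonoidAlgebra.single (v : Fin d → ℤ) c := by
  simp [emb]

lemma emb_injective : Function.Injective (emb k S) :=
  fun _ _ h => AddMonoidAlgebra.mapDomain_injective (R := k) (f := S.subtype) Subtype.coe_injective h

lemma mem_support_emb {f : AddMonoidAlgebra k S} {t : Fin d → ℤ}
    (ht : t ∈ (emb k S f).coeff.support) : ∃ s ∈ f.coeff.support, (s : Fin d → ℤ) = t := by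
  classical
  have := Finsupp.mapDomain_support (f := S.subtype) (s := f.coeff) ht
  simpa [eq_comm] using Finset.mem_image.mp this

lemma support_emb' (f : AddMonoidAlgebra k S) (s : S) (hs : s ∈ f.coeff.support) :
    (s : Fin d → ℤ) ∈ (emb k S f).coeff.support := by
  classical
  have : (emb k S f).coeff.support = f.coeff.support.image S.subtype :=
    Finsupp.mapDomain_support_of_injective Subtype.coe_injective f.coeff
  rw [this]
  exact Finset.mem_image_of_mem _ hs

variable (V : Finset (Fin d → ℤ))

/-- The condition characterising membership of `x^b` in the trace ideal. -/
def Cond (b : Fin d → ℤ) : Prop :=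
  ∃ v ∈ V, ∃ u ∈ AddSubgroup.closure (S : Set (Fin d → ℤ)),
    (∀ w ∈ V, u + w ∈ S) ∧ b = u + v

lemma cond_shift {b : Fin d → ℤ} (hb : Cond S V b) (t : Fin d → ℤ) (ht : t ∈ S) :
    Cond S V (t + b) := by
  obtain ⟨v, hv, u, hu, hcond, rfl⟩ := hb
  refine ⟨v, hv, t + u, ?_, fun w hw => ?_, by ring⟩
  · exact add_mem (AddSubgroup.subset_closure ht) hu
  · have := S.add_mem ht (hcond w hw)
    simpa [add_assoc] using this

/-- The ideal of elements all of whose monomials satisfy `Cond`. -/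
def W : Ideal (AddMonoidAlgebra k S) where
  carrier := {f | ∀ s ∈ f.coeff.support, Cond S V (s : Fin d → ℤ)}
  zero_mem' := by simp
  add_mem' := by
    intro f g hf hg s hs
    rcases Finset.mem_union.mp (Finsupp.support_add hs) with h | h
    · exact hf s h
    · exact hg s h
  smul_mem' := by
    classical
    intro c f hf s hs
    rw [smul_eq_mul] at hs
    obtain ⟨s₁, h₁, s₂, h₂, rfl⟩ :=
      Finset.mem_add.mp (AddMonoidAlgebra.support_coeff_mul_subset c f hs)
    have : Cond S V ((s₁ : Fin d → ℤ) + s₂) :=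
      cond_shift S V (hf s₂ h₂) _ s₁.2
    simpa using this

/-- Auxiliary: elements of the monomial ideal have all monomials in `V + S`. -/
def W₂ : Ideal (AddMonoidAlgebra k S) where
  carrier := {f | ∀ s ∈ f.coeff.support, ∃ v ∈ V, ∃ t ∈ S, (s : Fin d → ℤ) = v + t}
  zero_mem' := by simp
  add_mem' := by
    intro f g hf hg s hs
    rcases Finset.mem_union.mp (Finsupp.support_add hs) with h | h
    · exact hf s h
    · exact hg s h
  smul_mem' := by
    classical
    intro c f hf s hs
    rw [smul_eq_mul] at hs
    obtain ⟨s₁, h₁, s₂, h₂, rfl⟩ :=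
      Finset.mem_add.mp (AddMonoidAlgebra.support_coeff_mul_subset c f hs)
    obtain ⟨v, hv, t, ht, h⟩ := hf s₂ h₂
    exact ⟨v, hv, t + s₁, S.add_mem ht s₁.2, by
      push_cast [h]; ring⟩

end Test

section Key

variable {d : ℕ} (k : Type*) [Field k] (S : AddSubmonoid (Fin d → ℤ))
    (V : Finset (Fin d → ℤ)) (hVS : (V : Set (Fin d → ℤ)) ⊆ S)
    (I : Ideal (AddMonoidAlgebra k S))
    (hI : I = Ideal.span
      {f : AddMonoidAlgebra k S | ∃ v : S, (v : Fin d → ℤ) ∈ V ∧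
        f = AddMonoidAlgebra.single v (1 : k)})

include hI in
lemma I_le_W₂ : I ≤ W₂ k S V := by
  rw [hI, Ideal.span_le]
  rintro f ⟨v, hv, rfl⟩
  intro s hs
  have := Finsupp.support_single_subset hs
  simp only [Finset.mem_singleton] at this
  subst this
  exact ⟨(s : Fin d → ℤ), hv, 0, S.zero_mem, by simp⟩

include hVS hI in
lemma range_le_W {v₀ : Fin d → ℤ} (hv₀V : v₀ ∈ V)
    (φ : I →ₗ[AddMonoidAlgebra k S] AddMonoidAlgebra k S) :
    LinearMap.range φ ≤ Submodule.restrictScalars _ (W k S V) := by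
  classical
  have hv₀S : v₀ ∈ S := hVS hv₀V
  have hg₀I : AddMonoidAlgebra.single (⟨v₀, hv₀S⟩ : S) (1 : k) ∈ I := by
    rw [hI]; exact Ideal.subset_span ⟨⟨v₀, hv₀S⟩, hv₀V, rfl⟩
  set g₀ : I := ⟨AddMonoidAlgebra.single (⟨v₀, hv₀S⟩ : S) (1 : k), hg₀I⟩ with hg₀
  set h : AddMonoidAlgebra k S := φ g₀ with hh
  set q : AddMonoidAlgebra k (Fin d → ℤ) :=
    AddMonoidAlgebra.single (-v₀) 1 * emb k S h with hq
  -- the commutation identity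
  have comm : ∀ f : I, AddMonoidAlgebra.single (⟨v₀, hv₀S⟩ : S) (1 : k) * φ f
      = (f : AddMonoidAlgebra k S) * h := by
    intro f
    have e1 : ((AddMonoidAlgebra.single (⟨v₀, hv₀S⟩ : S) (1 : k)) • f)
        = ((f : AddMonoidAlgebra k S) • g₀) := by
      apply Subtype.ext
      simp [hg₀, smul_eq_mul, mul_comm]
    have := congrArg φ e1
    rw [map_smul, map_smul] at this
    simpa [smul_eq_mul, hh] using this
  -- the key equation in the Laurent algebra
  have key : ∀ f : I, emb k S (φ f) = q * emb k S (f : AddMonoidAlgebra k S) := by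
    intro f
    have := congrArg (emb k S) (comm f)
    rw [map_mul, map_mul, emb_single] at this
    have e2 : AddMonoidAlgebra.single (-v₀ : Fin d → ℤ) (1 : k) *
        (AddMonoidAlgebra.single (v₀ : Fin d → ℤ) (1 : k) * emb k S (φ f)) =
        AddMonoidAlgebra.single (-v₀ : Fin d → ℤ) (1 : k) *
        (emb k S (f : AddMonoidAlgebra k S) * emb k S h) := by rw [this]
    rw [← mul_assoc, AddMonoidAlgebra.single_mul_single] at e2
    simp only [neg_add_cancel, one_mul] at e2
    rw [← AddMonoidAlgebra.one_def, one_mul] at e2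
    rw [e2, hq]; ring
  -- properties of the support of q
  have hqsupp : ∀ b ∈ q.coeff.support, b ∈ AddSubgroup.closure (S : Set (Fin d → ℤ)) ∧
      (∀ w ∈ V, b + w ∈ S) := by
    intro b hb
    obtain ⟨b₁, hb₁, b₂, hb₂, rfl⟩ := Finset.mem_add.mp
      (AddMonoidAlgebra.support_coeff_mul_subset _ _ (hq ▸ hb))
    have hb₁' : b₁ = -v₀ := by
      have := Finsupp.support_single_subset hb₁
      simpa using this
    obtain ⟨s₂, hs₂, rfl⟩ := mem_support_emb k S hb₂
    constructor
    · subst hb₁'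
      exact add_mem (neg_mem (AddSubgroup.subset_closure hv₀S))
        (AddSubgroup.subset_closure s₂.2)
    · intro w hw
      have hwS : w ∈ S := hVS hw
      have hwI : AddMonoidAlgebra.single (⟨w, hwS⟩ : S) (1 : k) ∈ I := by
        rw [hI]; exact Ideal.subset_span ⟨⟨w, hwS⟩, hw, rfl⟩
      have hkey := key ⟨_, hwI⟩
      rw [emb_single] at hkey
      -- coefficient of q * single w 1 at b + w is q b
      have hcoef : (q * AddMonoidAlgebra.single (w : Fin d → ℤ) (1 : k)).coeff (b₁ + ↑s₂ + w)
          = q.coeff (b₁ + ↑s₂) * 1 :=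
        AddMonoidAlgebra.coeff_mul_single_eq_coeff_mul (b₁ + ↑s₂)
          (fun a _ => ⟨fun h' => add_right_cancel h', fun h' => by rw [h']⟩)
      have hbmem : (b₁ + ↑s₂ + w) ∈ (q * AddMonoidAlgebra.single (w : Fin d → ℤ) (1 : k)).coeff.support := by
        rw [Finsupp.mem_support_iff, hcoef, mul_one]
        exact Finsupp.mem_support_iff.mp (hq ▸ hb)
      rw [← hkey] at hbmem
      obtain ⟨s, _, hs⟩ := mem_support_emb k S hbmem
      rw [← hs]; exact s.2
  -- conclude
  rintro y ⟨f, rfl⟩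
  intro s hs
  have hs' : (s : Fin d → ℤ) ∈ (emb k S (φ f)).coeff.support := support_emb' k S _ s hs
  rw [key f] at hs'
  obtain ⟨b, hb, t, ht, hst⟩ := Finset.mem_add.mp (AddMonoidAlgebra.support_coeff_mul_subset _ _ hs')
  obtain ⟨s₂, hs₂, rfl⟩ := mem_support_emb k S ht
  obtain ⟨v, hv, t', ht', h'⟩ := I_le_W₂ k S V I hI f.2 s₂ hs₂
  obtain ⟨hb1, hb2⟩ := hqsupp b hb
  refine ⟨v, hv, b + t', ?_, fun w hw => ?_, ?_⟩
  · exact add_mem hb1 (AddSubgroup.subset_closure ht')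
  · have := S.add_mem (hb2 w hw) ht'
    simpa [add_assoc, add_comm, add_left_comm] using this
  · rw [← hst, h']; ring

end Key

section Back

variable {d : ℕ} (k : Type*) [Field k] (S : AddSubmonoid (Fin d → ℤ))
    (V : Finset (Fin d → ℤ))
    (I : Ideal (AddMonoidAlgebra k S))
    (hI : I = Ideal.span
      {f : AddMonoidAlgebra k S | ∃ v : S, (v : Fin d → ℤ) ∈ V ∧
        f = AddMonoidAlgebra.single v (1 : k)})

include hI in
lemma exists_mul_map {u : Fin d → ℤ} (hcond : ∀ w ∈ V, u + w ∈ S) :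
    ∃ φ : I →ₗ[AddMonoidAlgebra k S] AddMonoidAlgebra k S, ∀ f : I,
      emb k S (φ f) = AddMonoidAlgebra.single u (1 : k)
        * emb k S (f : AddMonoidAlgebra k S) := by
  classical
  set q : AddMonoidAlgebra k (Fin d → ℤ) := AddMonoidAlgebra.single u 1 with hq
  have hP : ∀ f ∈ I, ∃ g, emb k S g = q * emb k S f := by
    let P : Ideal (AddMonoidAlgebra k S) :=
      { carrier := {f | ∃ g, emb k S g = q * emb k S f}
        zero_mem' := ⟨0, by simp⟩
        add_mem' := by
          rintro f₁ f₂ ⟨g₁, h₁⟩ ⟨g₂, h₂⟩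
          exact ⟨g₁ + g₂, by rw [map_add, map_add, h₁, h₂, mul_add]⟩
        smul_mem' := by
          rintro c f ⟨g, hg⟩
          exact ⟨c * g, by rw [smul_eq_mul, map_mul, map_mul, hg]; ring⟩ }
    have hle : I ≤ P := by
      rw [hI, Ideal.span_le]
      rintro f ⟨v, hv, rfl⟩
      refine ⟨AddMonoidAlgebra.single (⟨u + (v : Fin d → ℤ), hcond _ hv⟩ : S) 1, ?_⟩
      rw [emb_single, emb_single, hq, AddMonoidAlgebra.single_mul_single, one_mul]
    exact fun f hf => hle hf
  choose g hg using hP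
  refine ⟨{ toFun := fun f => g f.1 f.2, map_add' := ?_, map_smul' := ?_ },
    fun f => hg f.1 f.2⟩
  · intro f₁ f₂
    apply emb_injective k S
    rw [map_add, hg, hg, hg, Submodule.coe_add, map_add, mul_add]
  · intro c f
    simp only [RingHom.id_apply, smul_eq_mul]
    apply emb_injective k S
    rw [map_mul, hg, hg, SetLike.val_smul, smul_eq_mul, map_mul]
    ring

end Back


/-- Proposition 3.1: let `S` be a pointed affine semigroup, `R = k[S]`, and let `I` be a
monomial ideal of `R` minimally generated by the monomials `x^v`, `v ∈ V`.  For `a ∈ S`,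
the monomial `x^a` lies in `tr(I)` iff `a = u + v` for some `v ∈ V` and some `u ∈ ℤS`
with `u + w ∈ S` for all `w ∈ V`. -/
theorem monomial_mem_traceIdeal_iff {d : ℕ} (k : Type*) [Field k]
    (S : AddSubmonoid (Fin d → ℤ))
    (hfg : ∃ G : Finset (Fin d → ℤ), AddSubmonoid.closure (G : Set (Fin d → ℤ)) = S)
    (hpointed : ∀ a ∈ S, -a ∈ S → a = 0)
    (V : Finset (Fin d → ℤ)) (hVS : (V : Set (Fin d → ℤ)) ⊆ S) (hVne : V.Nonempty)
    (I : Ideal (AddMonoidAlgebra k S))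
    (hI : I = Ideal.span
      {f : AddMonoidAlgebra k S | ∃ v : S, (v : Fin d → ℤ) ∈ V ∧ f = AddMonoidAlgebra.single v (1 : k)})
    -- minimality of the monomial generating set
    (hmin : ∀ v ∈ V, ∀ w ∈ V, v ≠ w → v - w ∉ S)
    (a : Fin d → ℤ) (ha : a ∈ S) :
    AddMonoidAlgebra.single (⟨a, ha⟩ : S) (1 : k) ∈ traceIdeal (AddMonoidAlgebra k S) I ↔
      ∃ v ∈ V, ∃ u ∈ AddSubgroup.closure (S : Set (Fin d → ℤ)),
        (∀ w ∈ V, u + w ∈ S) ∧ a = u + v := by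
  classical
  obtain ⟨v₀, hv₀V⟩ := hVne
  constructor
  · intro hmem
    have hle : traceIdeal (AddMonoidAlgebra k S) I ≤ W k S V :=
      iSup_le fun φ => range_le_W k S V hVS I hI hv₀V φ
    have hsupp : (⟨a, ha⟩ : S) ∈ (AddMonoidAlgebra.single (⟨a, ha⟩ : S) (1 : k)).coeff.support :=
      Finsupp.mem_support_iff.mpr (by simp)
    exact hle hmem _ hsupp
  · rintro ⟨v, hv, u, hu, hcond, rfl⟩
    obtain ⟨φ, hφ⟩ := exists_mul_map k S V I hI hcond
    have hvS : v ∈ S := hVS hv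
    have hvI : AddMonoidAlgebra.single (⟨v, hvS⟩ : S) (1 : k) ∈ I := by
      rw [hI]; exact Ideal.subset_span ⟨⟨v, hvS⟩, hv, rfl⟩
    have heq : AddMonoidAlgebra.single (⟨u + v, ha⟩ : S) (1 : k) = φ ⟨_, hvI⟩ := by
      apply emb_injective k S
      rw [hφ, emb_single, emb_single, AddMonoidAlgebra.single_mul_single, one_mul]
    rw [heq]
    exact le_iSup (fun ψ : I →ₗ[AddMonoidAlgebra k S] AddMonoidAlgebra k S =>
      LinearMap.range ψ) φ (LinearMap.mem_range_self φ _)
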